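/- There exists a constant C₁ > 0 such that for every integer n ≥ 1, every family 0 ≤ a₁ < b₁ < a₂ < b₂ < ⋯ < a_n < b_n ≤ 1 with A := ⋃_{i=1}^n (a_i, b_i), and every μ ∈ (0,1], there exists a Lipschitz function u : ℝ → ℝ with 0 ≤ u ≤ 1 such that (μ/2)∫₀¹ (u′(x))² dx − (1/2)∫₀¹ 𝟙_A(x)·u(x)² dx + (1/3)∫₀¹ u(x)³ dx + (1/6)·|A| ≤ C₁·√μ·n, where |A| = Σ_{i=1}^n (b_i − a_i) is the Lebesgue measure of A and u′ denotes the almost-everywhere defined derivative of the Lipschitz function u. -/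

import Mathlib

open MeasureTheory intervalIntegral

lemma lipschitzWith_finset_sup' {ι : Type*} (s : Finset ι) (hs : s.Nonempty) {K : NNReal}
    (f : ι → ℝ → ℝ) (hf : ∀ i ∈ s, LipschitzWith K (f i)) :
    LipschitzWith K (fun x => s.sup' hs fun i => f i x) := by
  refine LipschitzWith.of_dist_le_mul fun x y => ?_
  rw [Real.dist_eq, abs_sub_le_iff]
  have key : ∀ p q : ℝ, (s.sup' hs fun i => f i p) - (s.sup' hs fun i => f i q)
      ≤ K * dist p q := by
    intro p q
    rw [sub_le_iff_le_add]
    refine Finset.sup'_le _ _ fun i hi => ?_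
    have h1 : f i p - f i q ≤ K * dist p q := by
      have h2 := (hf i hi).dist_le_mul p q
      rw [Real.dist_eq] at h2
      have := le_abs_self (f i p - f i q)
      linarith
    have h2 : f i q ≤ s.sup' hs fun j => f j q := Finset.le_sup' (fun j => f j q) hi
    linarith
  exact ⟨key x y, by rw [dist_comm x y]; exact key y x⟩

lemma abs_deriv_le_of_lipschitz {f : ℝ → ℝ} {K : NNReal} (hf : LipschitzWith K f) (x : ℝ) :
    |deriv f x| ≤ K := by
  have h := norm_fderiv_le_of_lipschitz ℝ hf (x₀ := x)
  calc |deriv f x| = ‖fderiv ℝ f x 1‖ := by rw [fderiv_apply_one_eq_deriv]; exact (Real.norm_eq_abs _).symm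
    _ ≤ ‖fderiv ℝ f x‖ * ‖(1:ℝ)‖ := ContinuousLinearMap.le_opNorm _ _
    _ = ‖fderiv ℝ f x‖ := by simp
    _ ≤ K := h

lemma intervalIntegrable_of_bdd {f : ℝ → ℝ} {C : ℝ}
    (hm : Measurable f) (hb : ∀ x, |f x| ≤ C) :
    IntervalIntegrable f volume 0 1 := by
  rw [intervalIntegrable_iff]
  haveI : IsFiniteMeasure (volume.restrict (Set.uIoc (0:ℝ) 1)) := by
    constructor
    rw [Measure.restrict_apply_univ, Set.uIoc_of_le zero_le_one]
    exact measure_Ioc_lt_top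
  exact ⟨hm.aestronglyMeasurable.restrict,
    HasFiniteIntegral.of_bounded (ae_of_all _ fun x => by
      rw [Real.norm_eq_abs]; exact hb x)⟩

/-- Quantitative content of Proposition 1 (Pr:1D): for `A` a finite union of
`n` disjoint open intervals in `[0,1]` and `μ ∈ (0,1]`, the shifted energy
`Ẽ_{𝟙_A,μ}` admits a `[0,1]`-valued Lipschitz competitor `u` with
`Ẽ_{𝟙_A,μ}(u) ≤ C₁ √μ n`. -/
theorem energy_competitor_bound_1D :
    ∃ C₁ > (0:ℝ),
      ∀ (n : ℕ), 1 ≤ n →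
      ∀ (a b : Fin n → ℝ),
        (∀ i, 0 ≤ a i) → (∀ i, a i < b i) → (∀ i, b i ≤ 1) →
        (∀ i j, i < j → b i < a j) →
        ∀ (μ : ℝ), 0 < μ → μ ≤ 1 →
          ∃ u : ℝ → ℝ, (∃ L : NNReal, LipschitzWith L u) ∧
            (∀ x, 0 ≤ u x ∧ u x ≤ 1) ∧
            μ / 2 * (∫ x in (0:ℝ)..1, (deriv u x) ^ 2)
              - (1/2) * (∫ x in (0:ℝ)..1,
                  (⋃ i, Set.Ioo (a i) (b i)).indicator (fun _ => (1:ℝ)) x * u x ^ 2)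
              + (1/3) * (∫ x in (0:ℝ)..1, u x ^ 3)
              + (1/6) * (∑ i, (b i - a i))
            ≤ C₁ * Real.sqrt μ * n := by
  refine ⟨2, two_pos, ?_⟩
  intro n hn a b ha0 hab hb1 hord μ hμ0 hμ1
  set η := Real.sqrt μ with hηdef
  have hη0 : 0 < η := Real.sqrt_pos.2 hμ0
  have hη2 : η ^ 2 = μ := Real.sq_sqrt hμ0.le
  haveI : Nonempty (Fin n) := ⟨⟨0, hn⟩⟩
  have hne : (Finset.univ : Finset (Fin n)).Nonempty := Finset.univ_nonempty
  set c : ℝ := η⁻¹ with hcdef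
  have hc0 : 0 ≤ c := inv_nonneg.2 hη0.le
  set K : NNReal := c.toNNReal with hKdef
  have hK : (K : ℝ) = c := Real.coe_toNNReal _ hc0
  set f : Fin n → ℝ → ℝ := fun i x => min (c * (x - a i)) (c * (b i - x)) with hfdef
  set d : ℝ → ℝ := fun x => Finset.univ.sup' hne fun i => f i x with hddef
  set u : ℝ → ℝ := fun x => max 0 (min 1 (d x)) with hudef
  -- Lipschitz
  have hfLip : ∀ i ∈ (Finset.univ : Finset (Fin n)), LipschitzWith K (f i) := by
    intro i _
    have h1 : LipschitzWith K (fun x => c * (x - a i)) := by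
      refine LipschitzWith.of_dist_le_mul fun x y => ?_
      rw [Real.dist_eq, Real.dist_eq, hK]
      have he : c * (x - a i) - c * (y - a i) = c * (x - y) := by ring
      rw [he, abs_mul, abs_of_nonneg hc0]
    have h2 : LipschitzWith K (fun x => c * (b i - x)) := by
      refine LipschitzWith.of_dist_le_mul fun x y => ?_
      rw [Real.dist_eq, Real.dist_eq, hK]
      have he : c * (b i - x) - c * (b i - y) = c * (y - x) := by ring
      rw [he, abs_mul, abs_of_nonneg hc0, abs_sub_comm]
    simpa only [max_self] using h1.min h2
  have hdLip : LipschitzWith K d := lipschitzWith_finset_sup' _ hne f hfLip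
  have huLip : LipschitzWith K u := (hdLip.const_min 1).const_max 0
  -- basic bounds
  have hu01 : ∀ x, 0 ≤ u x ∧ u x ≤ 1 := by
    intro x
    refine ⟨le_max_left _ _, max_le zero_le_one (min_le_left _ _)⟩
  set A : Set ℝ := ⋃ i, Set.Ioo (a i) (b i) with hAdef
  have hAmeas : MeasurableSet A :=
    MeasurableSet.iUnion fun i => measurableSet_Ioo
  set T : Set ℝ := ⋃ i, (Set.Icc (a i) (a i + η) ∪ Set.Icc (b i - η) (b i)) with hTdef
  have hTmeas : MeasurableSet T :=
    MeasurableSet.iUnion fun i => (measurableSet_Icc.union measurableSet_Icc)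
  -- u vanishes outside A
  have hu0 : ∀ x, x ∉ A → u x = 0 := by
    intro x hx
    have hd0 : d x ≤ 0 := by
      refine Finset.sup'_le _ _ fun i _ => ?_
      have hxi : x ∉ Set.Ioo (a i) (b i) := fun h => hx (Set.mem_iUnion.2 ⟨i, h⟩)
      rcases le_or_gt x (a i) with h | h
      · exact le_trans (min_le_left _ _) (mul_nonpos_of_nonneg_of_nonpos hc0 (by linarith))
      · have hbx : b i ≤ x := by
          by_contra hbx
          exact hxi ⟨h, lt_of_not_ge hbx⟩
        exact le_trans (min_le_right _ _) (mul_nonpos_of_nonneg_of_nonpos hc0 (by linarith))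
    have : min 1 (d x) ≤ 0 := le_trans (min_le_right _ _) hd0
    exact max_eq_left this
  -- u equals one well inside
  have hu1 : ∀ i x, a i + η < x → x < b i - η → u x = 1 := by
    intro i x h1 h2
    have hfi : (1:ℝ) ≤ f i x := by
      have hc : c * η = 1 := inv_mul_cancel₀ hη0.ne'
      have e1 : (1:ℝ) ≤ c * (x - a i) := by
        rw [← hc]
        exact mul_le_mul_of_nonneg_left (by linarith) hc0
      have e2 : (1:ℝ) ≤ c * (b i - x) := by
        rw [← hc]
        exact mul_le_mul_of_nonneg_left (by linarith) hc0
      exact le_min e1 e2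
    have hd1 : (1:ℝ) ≤ d x := le_trans hfi (Finset.le_sup' (fun j => f j x) (Finset.mem_univ i))
    rw [hudef]
    simp only [min_eq_left hd1, max_eq_right zero_le_one]
  -- not in T, in A ⇒ well inside
  have hAT : ∀ x, x ∈ A → x ∉ T → ∃ i, a i + η < x ∧ x < b i - η := by
    intro x hx hxT
    obtain ⟨i, hi⟩ := Set.mem_iUnion.1 hx
    refine ⟨i, ?_, ?_⟩
    · have : x ∉ Set.Icc (a i) (a i + η) := fun h =>
        hxT (Set.mem_iUnion.2 ⟨i, Or.inl h⟩)
      rw [Set.mem_Icc, not_and_or] at this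
      rcases this with h | h
      · exact absurd hi.1.le (by simpa using h)
      · exact lt_of_not_ge h
    · have : x ∉ Set.Icc (b i - η) (b i) := fun h =>
        hxT (Set.mem_iUnion.2 ⟨i, Or.inr h⟩)
      rw [Set.mem_Icc, not_and_or] at this
      rcases this with h | h
      · exact lt_of_not_ge h
      · exact absurd hi.2.le (by simpa using h)
  -- deriv vanishes outside T
  have hderiv0 : ∀ x, x ∉ T → deriv u x = 0 := by
    intro x hxT
    by_cases hx : x ∈ ⋃ i, Set.Icc (a i) (b i)
    · obtain ⟨i, hi⟩ := Set.mem_iUnion.1 hx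
      have hxA : x ∈ A := by
        have h1 : x ∉ Set.Icc (a i) (a i + η) := fun h =>
          hxT (Set.mem_iUnion.2 ⟨i, Or.inl h⟩)
        have h2 : x ∉ Set.Icc (b i - η) (b i) := fun h =>
          hxT (Set.mem_iUnion.2 ⟨i, Or.inr h⟩)
        refine Set.mem_iUnion.2 ⟨i, ?_, ?_⟩
        · rcases (not_and_or.1 (Set.mem_Icc.1.mt h1)) with h | h
          · exact absurd hi.1 (by simpa using h)
          · have := lt_of_not_ge h
            linarith [hη0]
        · rcases (not_and_or.1 (Set.mem_Icc.1.mt h2)) with h | h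
          · have := lt_of_not_ge h
            linarith [hη0]
          · exact absurd hi.2 (by simpa using h)
      obtain ⟨j, hj1, hj2⟩ := hAT x hxA hxT
      have hev : u =ᶠ[nhds x] fun _ => (1:ℝ) := by
        refine Filter.eventuallyEq_of_mem (isOpen_Ioo.mem_nhds (show x ∈ Set.Ioo (a j + η) (b j - η) from ⟨hj1, hj2⟩)) ?_
        intro y hy
        exact hu1 j y hy.1 hy.2
      rw [hev.deriv_eq, deriv_const]
    · have hop : IsOpen (⋃ i, Set.Icc (a i) (b i))ᶜ :=
        (isClosed_iUnion_of_finite fun i => isClosed_Icc).isOpen_compl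
      have hev : u =ᶠ[nhds x] fun _ => (0:ℝ) := by
        refine Filter.eventuallyEq_of_mem (hop.mem_nhds hx) ?_
        intro y hy
        refine hu0 y fun hyA => ?_
        obtain ⟨i, hi⟩ := Set.mem_iUnion.1 hyA
        exact hy (Set.mem_iUnion.2 ⟨i, Set.Ioo_subset_Icc_self hi⟩)
      rw [hev.deriv_eq, deriv_const]
  have hderivb : ∀ x, |deriv u x| ≤ c := by
    intro x
    have := abs_deriv_le_of_lipschitz huLip x
    rwa [hK] at this
  -- indicator abbreviations
  set ind : ℝ → ℝ := A.indicator (fun _ => (1:ℝ)) with hinddef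
  set indT : ℝ → ℝ := T.indicator (fun _ => (1:ℝ)) with hindTdef
  -- integrability
  have hum : Measurable u := huLip.continuous.measurable
  have hindm : Measurable ind := measurable_const.indicator hAmeas
  have hindTm : Measurable indT := measurable_const.indicator hTmeas
  have hind01 : ∀ x, 0 ≤ ind x ∧ ind x ≤ 1 := by
    intro x
    rw [hinddef]
    unfold Set.indicator
    split <;> norm_num
  have hindT01 : ∀ x, 0 ≤ indT x ∧ indT x ≤ 1 := by
    intro x
    rw [hindTdef]
    unfold Set.indicator
    split <;> norm_num
  have I1int : IntervalIntegrable (fun x => (deriv u x) ^ 2) volume 0 1 := by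
    refine intervalIntegrable_of_bdd ((measurable_deriv u).pow_const 2) (C := c ^ 2) fun x => ?_
    rw [abs_of_nonneg (sq_nonneg _), ← sq_abs]
    exact pow_le_pow_left₀ (abs_nonneg _) (hderivb x) 2
  have I2int : IntervalIntegrable (fun x => ind x * u x ^ 2) volume 0 1 := by
    refine intervalIntegrable_of_bdd (hindm.mul (hum.pow_const 2)) (C := 1) fun x => ?_
    rw [abs_mul, abs_of_nonneg (hind01 x).1, abs_of_nonneg (sq_nonneg _)]
    calc ind x * u x ^ 2 ≤ 1 * 1 := by
          refine mul_le_mul (hind01 x).2 ?_ (sq_nonneg _) zero_le_one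
          calc u x ^ 2 ≤ 1 ^ 2 := pow_le_pow_left₀ (hu01 x).1 (hu01 x).2 2
            _ = 1 := one_pow 2
      _ = 1 := one_mul 1
  have I3int : IntervalIntegrable (fun x => u x ^ 3) volume 0 1 := by
    refine intervalIntegrable_of_bdd (hum.pow_const 3) (C := 1) fun x => ?_
    rw [abs_of_nonneg (pow_nonneg (hu01 x).1 3)]
    calc u x ^ 3 ≤ 1 ^ 3 := pow_le_pow_left₀ (hu01 x).1 (hu01 x).2 3
      _ = 1 := one_pow 3
  have I4int : IntervalIntegrable ind volume 0 1 := by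
    refine intervalIntegrable_of_bdd hindm (C := 1) fun x => ?_
    rw [abs_of_nonneg (hind01 x).1]; exact (hind01 x).2
  have hTint : IntervalIntegrable (fun x => 2/3 * indT x) volume 0 1 := by
    refine intervalIntegrable_of_bdd (hindTm.const_mul _) (C := 1) fun x => ?_
    rw [abs_mul, abs_of_nonneg (hindT01 x).1, abs_of_pos (by norm_num : (0:ℝ) < 2/3)]
    nlinarith [(hindT01 x).1, (hindT01 x).2]
  -- the combined integrand
  set g : ℝ → ℝ := fun x => μ/2 * (deriv u x) ^ 2 - 1/2 * (ind x * u x ^ 2)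
      + 1/3 * u x ^ 3 + 1/6 * ind x with hgdef
  have h1' := I1int.const_mul (μ/2)
  have h2' := I2int.const_mul ((1:ℝ)/2)
  have h3' := I3int.const_mul ((1:ℝ)/3)
  have h4' := I4int.const_mul ((1:ℝ)/6)
  have hgint : IntervalIntegrable g volume 0 1 := (((h1'.sub h2').add h3').add h4')
  have hsplit : (∫ x in (0:ℝ)..1, g x)
      = μ/2 * (∫ x in (0:ℝ)..1, (deriv u x) ^ 2)
        - 1/2 * (∫ x in (0:ℝ)..1, ind x * u x ^ 2)
        + 1/3 * (∫ x in (0:ℝ)..1, u x ^ 3)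
        + 1/6 * (∫ x in (0:ℝ)..1, ind x) := by
    rw [hgdef]
    rw [intervalIntegral.integral_add ((h1'.sub h2').add h3') h4',
        intervalIntegral.integral_add (h1'.sub h2') h3',
        intervalIntegral.integral_sub h1' h2',
        intervalIntegral.integral_const_mul, intervalIntegral.integral_const_mul,
        intervalIntegral.integral_const_mul, intervalIntegral.integral_const_mul]
  -- pointwise bound
  have hpt : ∀ x, g x ≤ 2/3 * indT x := by
    intro x
    obtain ⟨hux0, hux1⟩ := hu01 x
    by_cases hT : x ∈ T
    · rw [hindTdef]
      simp only [Set.indicator_of_mem hT]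
      have h1 : μ/2 * (deriv u x) ^ 2 ≤ 1/2 := by
        have hd2 : (deriv u x) ^ 2 ≤ c ^ 2 := by
          rw [← sq_abs]
          exact pow_le_pow_left₀ (abs_nonneg _) (hderivb x) 2
        have hmc : μ * c ^ 2 = 1 := by
          rw [hcdef, inv_pow, hη2]
          exact mul_inv_cancel₀ hμ0.ne'
        nlinarith [hμ0.le]
      have h2 : -(1/2) * (ind x * u x ^ 2) + 1/3 * u x ^ 3 + 1/6 * ind x ≤ 1/6 := by
        by_cases hA : x ∈ A
        · rw [hinddef]
          simp only [Set.indicator_of_mem hA]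
          nlinarith [hux0, hux1]
        · rw [hinddef]
          simp only [Set.indicator_of_notMem hA]
          rw [hu0 x hA]
          norm_num
      rw [hgdef]
      simp only
      linarith
    · rw [hindTdef]
      simp only [Set.indicator_of_notMem hT, mul_zero]
      rw [hgdef]
      simp only
      rw [hderiv0 x hT]
      by_cases hA : x ∈ A
      · obtain ⟨i, hi1, hi2⟩ := hAT x hA hT
        rw [hu1 i x hi1 hi2, hinddef]
        simp only [Set.indicator_of_mem hA]
        norm_num
      · rw [hu0 x hA, hinddef]
        simp only [Set.indicator_of_notMem hA]
        norm_num
  have hmono : (∫ x in (0:ℝ)..1, g x) ≤ ∫ x in (0:ℝ)..1, 2/3 * indT x :=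
    intervalIntegral.integral_mono_on zero_le_one hgint hTint fun x _ => hpt x
  -- measure of T is small
  have hTvol : (∫ x in (0:ℝ)..1, indT x) ≤ 2 * n * η := by
    rw [intervalIntegral.integral_of_le zero_le_one, hindTdef,
        setIntegral_indicator hTmeas, setIntegral_const, smul_eq_mul, mul_one]
    have hv : volume (Set.Ioc (0:ℝ) 1 ∩ T) ≤ ENNReal.ofReal (2 * n * η) := by
      calc volume (Set.Ioc (0:ℝ) 1 ∩ T) ≤ volume T := measure_mono Set.inter_subset_right
        _ ≤ ∑' i : Fin n, volume (Set.Icc (a i) (a i + η) ∪ Set.Icc (b i - η) (b i)) :=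
            measure_iUnion_le _
        _ = ∑ i : Fin n, volume (Set.Icc (a i) (a i + η) ∪ Set.Icc (b i - η) (b i)) :=
            tsum_fintype _
        _ ≤ ∑ i : Fin n, ENNReal.ofReal (2 * η) := by
            refine Finset.sum_le_sum fun i _ => ?_
            calc volume (Set.Icc (a i) (a i + η) ∪ Set.Icc (b i - η) (b i))
                ≤ volume (Set.Icc (a i) (a i + η)) + volume (Set.Icc (b i - η) (b i)) :=
                  measure_union_le _ _
              _ = ENNReal.ofReal (2 * η) := by
                  rw [Real.volume_Icc, Real.volume_Icc]
                  rw [show a i + η - a i = η by ring, show b i - (b i - η) = η by ring,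
                    ← ENNReal.ofReal_add hη0.le hη0.le]
                  norm_num [two_mul]
        _ = (n : ENNReal) * ENNReal.ofReal (2 * η) := by
            rw [Finset.sum_const, Finset.card_univ, Fintype.card_fin, nsmul_eq_mul]
        _ = ENNReal.ofReal (2 * n * η) := by
            rw [← ENNReal.ofReal_natCast n, ← ENNReal.ofReal_mul (Nat.cast_nonneg n)]
            ring_nf
    exact ENNReal.toReal_le_of_le_ofReal (by positivity) hv
  -- the measure identity for A
  have hSum : (∑ i, (b i - a i)) = ∫ x in (0:ℝ)..1, ind x := by
    rw [intervalIntegral.integral_of_le zero_le_one, hinddef,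
        setIntegral_indicator hAmeas, setIntegral_const, smul_eq_mul, mul_one]
    have hsub : A ⊆ Set.Ioc (0:ℝ) 1 := by
      intro x hx
      obtain ⟨i, hi⟩ := Set.mem_iUnion.1 hx
      exact ⟨lt_of_le_of_lt (ha0 i) hi.1, le_trans hi.2.le (hb1 i)⟩
    rw [Set.inter_eq_right.2 hsub]
    have hdisj : Pairwise (Function.onFun Disjoint fun i => Set.Ioo (a i) (b i)) := by
      intro i j hij
      rw [Function.onFun, Set.Ioo_disjoint_Ioo]
      rcases lt_or_gt_of_ne hij with h | h
      · calc min (b i) (b j) ≤ b i := min_le_left _ _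
          _ ≤ a j := (hord i j h).le
          _ ≤ max (a i) (a j) := le_max_right _ _
      · calc min (b i) (b j) ≤ b j := min_le_right _ _
          _ ≤ a i := (hord j i h).le
          _ ≤ max (a i) (a j) := le_max_left _ _
    rw [hAdef, measureReal_def, measure_iUnion hdisj fun i => measurableSet_Ioo, tsum_fintype]
    rw [ENNReal.toReal_sum fun i _ => by
      rw [Real.volume_Ioo]; exact ENNReal.ofReal_ne_top]
    refine Finset.sum_congr rfl fun i _ => ?_
    rw [Real.volume_Ioo, ENNReal.toReal_ofReal (by linarith [hab i])]
  -- final assembly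
  refine ⟨u, ⟨K, huLip⟩, hu01, ?_⟩
  have hfinal : μ / 2 * (∫ x in (0:ℝ)..1, (deriv u x) ^ 2)
      - (1/2) * (∫ x in (0:ℝ)..1, ind x * u x ^ 2)
      + (1/3) * (∫ x in (0:ℝ)..1, u x ^ 3)
      + (1/6) * (∑ i, (b i - a i)) ≤ 2 * η * n := by
    rw [hSum, show μ / 2 * (∫ x in (0:ℝ)..1, (deriv u x) ^ 2)
      - (1/2) * (∫ x in (0:ℝ)..1, ind x * u x ^ 2)
      + (1/3) * (∫ x in (0:ℝ)..1, u x ^ 3)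
      + (1/6) * (∫ x in (0:ℝ)..1, ind x) = ∫ x in (0:ℝ)..1, g x from hsplit.symm]
    calc (∫ x in (0:ℝ)..1, g x) ≤ ∫ x in (0:ℝ)..1, 2/3 * indT x := hmono
      _ = 2/3 * ∫ x in (0:ℝ)..1, indT x := intervalIntegral.integral_const_mul _ _
      _ ≤ 2/3 * (2 * n * η) := by
          refine mul_le_mul_of_nonneg_left hTvol (by norm_num)
      _ ≤ 2 * η * n := by nlinarith [hη0.le, (Nat.one_le_cast (α := ℝ)).2 hn]
  exact hfinal
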